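/- arXiv:2110.01321 — 4 statements merged into one kernel-verified Lean document; each statement's English description precedes it below -/
import Mathlib

section
/- Let 0 < φ ≤ 1/2 (with φ = ψ/π, 0 < ψ ≤ π/2) and θ > 0. Define h₀(x) = B_{sin²(πx/(2θ))}(φ, 1−φ) for 0 < x ≤ θ. Then the function k(x) = h₀(x)/x^(2φ) is non-increasing on (0, θ]. -/
open Real MeasureTheory Set

/-- The incomplete Beta function `B_x(a,b) = ∫_0^x s^(a-1) (1-s)^(b-1) ds`. -/
noncomputable def incBeta (a b x : ℝ) : ℝ :=
  ∫ s in (0:ℝ)..x, s ^ (a - 1) * (1 - s) ^ (b - 1)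

open Filter Topology

private lemma aux_int {φ : ℝ} (h0 : 0 < φ) (h1 : φ < 1) :
    IntervalIntegrable (fun s : ℝ => s ^ (φ - 1) * (1 - s) ^ (-φ)) volume 0 1 := by
  have A : IntervalIntegrable (fun s : ℝ => s ^ (φ - 1) * (1 - s) ^ (-φ)) volume 0 (1/2) := by
    apply (intervalIntegral.intervalIntegrable_rpow' (by linarith)).mul_continuousOn
    intro s hs
    rw [uIcc_of_le (by norm_num : (0:ℝ) ≤ 1/2)] at hs
    have h1s : (1:ℝ) - s ≠ 0 := by have := hs.2; intro h; nlinarith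
    exact ((Real.continuousAt_rpow_const (1-s) (-φ) (Or.inl h1s)).comp
      ((continuous_const.sub continuous_id).continuousAt)).continuousWithinAt
  have B : IntervalIntegrable (fun s : ℝ => s ^ (φ - 1) * (1 - s) ^ (-φ)) volume (1/2) 1 := by
    have base : IntervalIntegrable (fun x : ℝ => x ^ (-φ)) volume 0 (1/2) :=
      intervalIntegral.intervalIntegrable_rpow' (by linarith)
    have base2 := (base.comp_sub_left 1).symm
    norm_num at base2
    apply base2.continuousOn_mul
    intro s hs
    rw [uIcc_of_le (by norm_num : (1:ℝ)/2 ≤ 1)] at hs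
    have hsne : s ≠ 0 := by have := hs.1; intro h; norm_num [h] at this
    exact (Real.continuousAt_rpow_const s (φ-1) (Or.inl hsne)).continuousWithinAt
  exact A.trans B

private lemma aux_int' {φ : ℝ} (h0 : 0 < φ) (h1 : φ < 1) {x : ℝ} (hx0 : 0 ≤ x) (hx1 : x ≤ 1) :
    IntervalIntegrable (fun s : ℝ => s ^ (φ - 1) * (1 - s) ^ (-φ)) volume 0 x :=
  (aux_int h0 h1).mono_set
    (by rw [uIcc_of_le hx0, uIcc_of_le zero_le_one]; exact Icc_subset_Icc le_rfl hx1)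

private lemma aux_contOn {φ : ℝ} (h0 : 0 < φ) (h1 : φ < 1) :
    ContinuousOn (fun x => ∫ s in (0:ℝ)..x, s ^ (φ - 1) * (1 - s) ^ (-φ)) (Icc 0 1) := by
  have h := intervalIntegral.continuousOn_primitive_interval (a := (0:ℝ)) (b := 1)
    (μ := volume) (f := fun s : ℝ => s ^ (φ - 1) * (1 - s) ^ (-φ)) ?_
  · simpa [uIcc_of_le (zero_le_one' ℝ)] using h
  · rw [uIcc_of_le (zero_le_one' ℝ), integrableOn_Icc_iff_integrableOn_Ioc]
    exact (intervalIntegrable_iff_integrableOn_Ioc_of_le zero_le_one).mp (aux_int h0 h1)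

private lemma aux_deriv {φ : ℝ} (h0 : 0 < φ) (h1 : φ < 1) {t : ℝ} (ht : t ∈ Ioo (0:ℝ) 1) :
    HasDerivAt (fun x => ∫ s in (0:ℝ)..x, s ^ (φ - 1) * (1 - s) ^ (-φ))
      (t ^ (φ - 1) * (1 - t) ^ (-φ)) t := by
  apply intervalIntegral.integral_hasDerivAt_right (aux_int' h0 h1 ht.1.le ht.2.le)
  · refine ⟨univ, univ_mem, ?_⟩
    apply Measurable.aestronglyMeasurable
    fun_prop
  · have c1 : ContinuousAt (fun s : ℝ => s ^ (φ - 1)) t :=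
      Real.continuousAt_rpow_const t _ (Or.inl ht.1.ne')
    have c2 : ContinuousAt (fun s : ℝ => (1 - s) ^ (-φ)) t :=
      (Real.continuousAt_rpow_const (1 - t) _ (Or.inl (by have := ht.2; intro h; nlinarith))).comp
        ((continuous_const.sub continuous_id).continuousAt)
    exact c1.mul c2

private lemma aux_g_deriv {φ : ℝ} (h0 : 0 < φ) (h2 : φ ≤ 1/2) {v : ℝ}
    (hv : v ∈ Ioo 0 (π/2)) :
    HasDerivAt (fun v => 2*φ*(∫ s in (0:ℝ)..(Real.sin v^2), s ^ (φ - 1) * (1 - s) ^ (-φ))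
        - 2*v*Real.sin v^(2*φ-1)*Real.cos v^(1-2*φ))
      (2*(Real.sin v^(2*φ-2) * Real.cos v^(-(2*φ)))*((2*φ-1)*(Real.sin v*Real.cos v - v))) v := by
  have h1 : φ < 1 := by linarith
  have hs : 0 < Real.sin v := Real.sin_pos_of_pos_of_lt_pi hv.1 (by linarith [Real.pi_pos, hv.2])
  have hc : 0 < Real.cos v := Real.cos_pos_of_mem_Ioo ⟨by linarith [Real.pi_pos, hv.1], hv.2⟩
  have ht : Real.sin v ^ 2 ∈ Ioo (0:ℝ) 1 := by
    constructor
    · positivity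
    · nlinarith [Real.sin_sq_add_cos_sq v]
  have hsin2 : HasDerivAt (fun v => Real.sin v ^ 2) (2 * Real.sin v ^ 1 * Real.cos v) v := by
    simpa using (Real.hasDerivAt_sin v).fun_pow 2
  have term1 := ((aux_deriv h0 h1 ht).comp v hsin2).const_mul (2*φ)
  have hA : HasDerivAt (fun v : ℝ => 2*v) 2 v := by
    simpa using (hasDerivAt_id v).const_mul 2
  have hB := (Real.hasDerivAt_sin v).rpow_const (p := 2*φ-1) (Or.inl hs.ne')
  have hC := (Real.hasDerivAt_cos v).rpow_const (p := 1-2*φ) (Or.inl hc.ne')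
  have term2 := (hA.fun_mul hB).fun_mul hC
  have hd := term1.fun_sub term2
  refine hd.congr_deriv ?_
  symm
  have e1 : ((Real.sin v ^ 2 : ℝ)) ^ (φ-1) = Real.sin v ^ (2*φ-2) := by
    rw [← Real.rpow_natCast (Real.sin v) 2, ← Real.rpow_mul hs.le]
    congr 1; push_cast; ring
  have e2 : ((1 - Real.sin v ^ 2 : ℝ)) ^ (-φ) = Real.cos v ^ (-(2*φ)) := by
    rw [← Real.cos_sq', ← Real.rpow_natCast (Real.cos v) 2, ← Real.rpow_mul hc.le]
    congr 1; push_cast; ring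
  have e3 : Real.sin v ^ (2*φ-1) = Real.sin v ^ (2*φ-2) * Real.sin v := by
    rw [show 2*φ-1 = (2*φ-2)+1 by ring, Real.rpow_add_one hs.ne']
  have e5 : Real.cos v ^ (1-2*φ) = Real.cos v ^ (-(2*φ)) * Real.cos v := by
    rw [show 1-2*φ = (-(2*φ))+1 by ring, Real.rpow_add_one hc.ne']
  have e4 : (2*φ-1-1 : ℝ) = 2*φ-2 := by ring
  have e6 : (1-2*φ-1 : ℝ) = -(2*φ) := by ring
  rw [e4, e6, e1, e2, e3, e5]
  have pyth := Real.sin_sq_add_cos_sq v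
  simp only [pow_one]
  linear_combination (2*v*(2*φ-1)*(Real.sin v^(2*φ-2))*(Real.cos v^(-(2*φ)))) * pyth

private lemma aux_g_nonneg {φ : ℝ} (h0 : 0 < φ) (h2 : φ ≤ 1/2) {u : ℝ}
    (hu : u ∈ Ioo 0 (π/2)) :
    2*u*Real.sin u^(2*φ-1)*Real.cos u^(1-2*φ)
      ≤ 2*φ*(∫ s in (0:ℝ)..(Real.sin u^2), s ^ (φ - 1) * (1 - s) ^ (-φ)) := by
  have h1 : φ < 1 := by linarith
  set G : ℝ → ℝ := fun v => 2*φ*(∫ s in (0:ℝ)..(Real.sin v^2), s ^ (φ - 1) * (1 - s) ^ (-φ))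
      - 2*v*Real.sin v^(2*φ-1)*Real.cos v^(1-2*φ) with hGdef
  have hmono : MonotoneOn G (Ioo 0 (π/2)) := by
    apply monotoneOn_of_deriv_nonneg (convex_Ioo _ _)
    · intro v hv; exact (aux_g_deriv h0 h2 hv).continuousAt.continuousWithinAt
    · rw [interior_Ioo]; intro v hv
      exact (aux_g_deriv h0 h2 hv).differentiableAt.differentiableWithinAt
    · rw [interior_Ioo]; intro v hv
      rw [(aux_g_deriv h0 h2 hv).deriv]
      have hs : 0 < Real.sin v := Real.sin_pos_of_pos_of_lt_pi hv.1 (by linarith [Real.pi_pos, hv.2])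
      have hc : 0 < Real.cos v := Real.cos_pos_of_mem_Ioo ⟨by linarith [Real.pi_pos, hv.1], hv.2⟩
      have hscv : Real.sin v * Real.cos v - v ≤ 0 := by
        nlinarith [Real.sin_lt hv.1, Real.cos_le_one v, hs]
      have hP : (0:ℝ) < Real.sin v ^ (2*φ-2) := Real.rpow_pos_of_pos hs _
      have hQ : (0:ℝ) < Real.cos v ^ (-(2*φ)) := Real.rpow_pos_of_pos hc _
      have hx : 0 ≤ (2*φ-1)*(Real.sin v*Real.cos v - v) := by nlinarith [hscv]
      exact mul_nonneg (by positivity) hx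
  have hlim : Tendsto G (𝓝[>] (0:ℝ)) (𝓝 0) := by
    have hA : Tendsto (fun v => 2*φ*(∫ s in (0:ℝ)..(Real.sin v^2), s ^ (φ - 1) * (1 - s) ^ (-φ)))
        (𝓝[>] (0:ℝ)) (𝓝 0) := by
      have hcw : ContinuousWithinAt
          (fun x => ∫ s in (0:ℝ)..x, s ^ (φ - 1) * (1 - s) ^ (-φ)) (Icc 0 1) 0 :=
        (aux_contOn h0 h1) 0 (by norm_num)
      have hsin : Tendsto (fun v => Real.sin v^2) (𝓝[>] (0:ℝ)) (𝓝[Icc 0 1] 0) := by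
        apply tendsto_nhdsWithin_of_tendsto_nhds_of_eventually_within
        · have := (Real.continuous_sin.fun_pow 2).tendsto 0
          simpa using this.mono_left nhdsWithin_le_nhds
        · exact Eventually.of_forall (fun v => ⟨sq_nonneg _, Real.sin_sq_le_one v⟩)
      have hcomp := hcw.tendsto.comp hsin
      simp only [Function.comp_def] at hcomp
      rw [show (∫ s in (0:ℝ)..(0:ℝ), s ^ (φ - 1) * (1 - s) ^ (-φ)) = 0 from
        intervalIntegral.integral_same] at hcomp
      simpa using hcomp.const_mul (2*φ)
    have hB : Tendsto (fun v => 2*v*Real.sin v^(2*φ-1)*Real.cos v^(1-2*φ))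
        (𝓝[>] (0:ℝ)) (𝓝 0) := by
      apply squeeze_zero' (g := fun v => (2*(2/π)^(2*φ-1))*v^(2*φ))
      · filter_upwards [Ioo_mem_nhdsGT Real.pi_div_two_pos] with v hv
        have hs : 0 < Real.sin v :=
          Real.sin_pos_of_pos_of_lt_pi hv.1 (by linarith [Real.pi_pos, hv.2])
        have hc : 0 < Real.cos v :=
          Real.cos_pos_of_mem_Ioo ⟨by linarith [Real.pi_pos, hv.1], hv.2⟩
        have A := Real.rpow_pos_of_pos hs (2*φ-1)
        have B := Real.rpow_pos_of_pos hc (1-2*φ)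
        exact le_of_lt (mul_pos (mul_pos (by linarith [hv.1] : (0:ℝ) < 2*v) A) B)
      · filter_upwards [Ioo_mem_nhdsGT Real.pi_div_two_pos] with v hv
        have hs : 0 < Real.sin v :=
          Real.sin_pos_of_pos_of_lt_pi hv.1 (by linarith [Real.pi_pos, hv.2])
        have hc : 0 < Real.cos v :=
          Real.cos_pos_of_mem_Ioo ⟨by linarith [Real.pi_pos, hv.1], hv.2⟩
        have hπ := Real.pi_pos
        have hb1 : Real.sin v^(2*φ-1) ≤ (2/π*v)^(2*φ-1) :=
          Real.rpow_le_rpow_of_nonpos (mul_pos (by positivity) hv.1)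
            (Real.mul_le_sin hv.1.le hv.2.le) (by linarith)
        have hb2 : Real.cos v^(1-2*φ) ≤ 1 :=
          Real.rpow_le_one hc.le (Real.cos_le_one v) (by linarith)
        have hsplit : ((2/π*v):ℝ)^(2*φ-1) = (2/π)^(2*φ-1)*v^(2*φ-1) :=
          Real.mul_rpow (by positivity) hv.1.le
        have hvv : v * v^(2*φ-1) = v^(2*φ) := by
          have h := Real.rpow_add hv.1 1 (2*φ-1)
          rw [Real.rpow_one] at h
          rw [show (1:ℝ)+(2*φ-1) = 2*φ by ring] at h
          exact h.symm
        have A := Real.rpow_pos_of_pos hs (2*φ-1)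
        have t1 : 2*v*Real.sin v^(2*φ-1)*Real.cos v^(1-2*φ) ≤ 2*v*Real.sin v^(2*φ-1) :=
          mul_le_of_le_one_right (le_of_lt (mul_pos (by linarith [hv.1] : (0:ℝ) < 2*v) A)) hb2
        have t2 : 2*v*Real.sin v^(2*φ-1) ≤ 2*v*((2/π)^(2*φ-1)*v^(2*φ-1)) := by
          rw [hsplit] at hb1
          exact mul_le_mul_of_nonneg_left hb1 (by linarith [hv.1])
        calc 2*v*Real.sin v^(2*φ-1)*Real.cos v^(1-2*φ)
            ≤ 2*v*Real.sin v^(2*φ-1) := t1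
          _ ≤ 2*v*((2/π)^(2*φ-1)*v^(2*φ-1)) := t2
          _ = (2*(2/π)^(2*φ-1))*(v*v^(2*φ-1)) := by ring
          _ = (2*(2/π)^(2*φ-1))*v^(2*φ) := by rw [hvv]
      · have h0' : (0:ℝ) < 2*φ := by linarith
        have hrp := (Real.continuousAt_rpow_const 0 (2*φ) (Or.inr h0'.le)).tendsto
        rw [Real.zero_rpow h0'.ne'] at hrp
        simpa using (hrp.mono_left nhdsWithin_le_nhds).const_mul (2*(2/π)^(2*φ-1))
    simpa using hA.sub hB
  have hev : ∀ᶠ v in 𝓝[>] (0:ℝ), G v ≤ G u := by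
    filter_upwards [Ioo_mem_nhdsGT hu.1] with v hv
    exact hmono ⟨hv.1, hv.2.trans hu.2⟩ hu hv.2.le
  have hfin := le_of_tendsto hlim hev
  simp only [hGdef] at hfin
  linarith

theorem k_antitone (φ θ : ℝ) (hφ : 0 < φ) (hφ' : φ ≤ 1 / 2) (hθ : 0 < θ) :
    AntitoneOn
      (fun x => incBeta φ (1 - φ) (Real.sin (Real.pi * x / (2 * θ)) ^ 2) / x ^ (2 * φ))
      (Set.Ioc 0 θ) := by
  have h1 : φ < 1 := by linarith
  have hfun : (fun x => incBeta φ (1 - φ) (Real.sin (Real.pi * x / (2 * θ)) ^ 2) / x ^ (2 * φ))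
      = fun x => (∫ s in (0:ℝ)..(Real.sin (Real.pi * x / (2 * θ)) ^ 2),
          s ^ (φ - 1) * (1 - s) ^ (-φ)) / x ^ (2 * φ) := by
    funext x
    simp only [incBeta, show (1:ℝ) - φ - 1 = -φ by ring]
  rw [hfun]
  have key : ∀ x ∈ Ioo 0 θ, ∃ d, HasDerivAt
      (fun x => (∫ s in (0:ℝ)..(Real.sin (Real.pi * x / (2 * θ)) ^ 2),
        s ^ (φ - 1) * (1 - s) ^ (-φ)) / x ^ (2 * φ)) d x ∧ d ≤ 0 := by
    intro x hx
    set u := Real.pi * x / (2 * θ) with hu_def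
    have hπ := Real.pi_pos
    have hu : u ∈ Ioo 0 (π/2) := by
      constructor
      · rw [hu_def]; exact div_pos (mul_pos hπ hx.1) (by linarith)
      · rw [hu_def, div_lt_div_iff₀ (by linarith) (by norm_num)]
        nlinarith [hx.2]
    have hs : 0 < Real.sin u := Real.sin_pos_of_pos_of_lt_pi hu.1 (by linarith [hu.2])
    have hc : 0 < Real.cos u := Real.cos_pos_of_mem_Ioo ⟨by linarith [hu.1], hu.2⟩
    have ht : Real.sin u ^ 2 ∈ Ioo (0:ℝ) 1 := by
      constructor
      · positivity
      · nlinarith [Real.sin_sq_add_cos_sq u]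
    have hU : HasDerivAt (fun x : ℝ => Real.pi * x / (2 * θ)) (Real.pi / (2 * θ)) x := by
      simpa using ((hasDerivAt_id x).const_mul Real.pi).div_const (2 * θ)
    have hsinU := (Real.hasDerivAt_sin u).comp x hU
    have hsin2 := hsinU.fun_pow 2
    have hnum := (aux_deriv hφ h1 ht).comp x hsin2
    have hden : HasDerivAt (fun x : ℝ => x ^ (2*φ)) (2*φ*x^(2*φ-1)) x :=
      Real.hasDerivAt_rpow_const (Or.inl hx.1.ne')
    have hk := hnum.div hden (Real.rpow_pos_of_pos hx.1 (2*φ)).ne'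
    refine ⟨_, hk, ?_⟩
    apply div_nonpos_of_nonpos_of_nonneg _ (sq_nonneg _)
    -- numerator ≤ 0
    have hxq : (0:ℝ) < x ^ (2*φ-1) := Real.rpow_pos_of_pos hx.1 _
    have hxp : x ^ (2*φ) = x ^ (2*φ-1) * x := by
      have h := Real.rpow_add hx.1 (2*φ-1) 1
      rw [Real.rpow_one] at h
      rw [show (2*φ-1)+1 = 2*φ by ring] at h
      exact h
    have e1 : ((Real.sin u ^ 2 : ℝ)) ^ (φ-1) = Real.sin u ^ (2*φ-2) := by
      rw [← Real.rpow_natCast (Real.sin u) 2, ← Real.rpow_mul hs.le]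
      congr 1; push_cast; ring
    have e2 : ((1 - Real.sin u ^ 2 : ℝ)) ^ (-φ) = Real.cos u ^ (-(2*φ)) := by
      rw [← Real.cos_sq', ← Real.rpow_natCast (Real.cos u) 2, ← Real.rpow_mul hc.le]
      congr 1; push_cast; ring
    have e3 : Real.sin u ^ (2*φ-1) = Real.sin u ^ (2*φ-2) * Real.sin u := by
      rw [show 2*φ-1 = (2*φ-2)+1 by ring, Real.rpow_add_one hs.ne']
    have e5 : Real.cos u ^ (1-2*φ) = Real.cos u ^ (-(2*φ)) * Real.cos u := by
      rw [show 1-2*φ = (-(2*φ))+1 by ring, Real.rpow_add_one hc.ne']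
    have hAx : (Real.sin u ^ 2) ^ (φ-1) * (1 - Real.sin u ^ 2) ^ (-φ)
          * (2 * Real.sin u * (Real.cos u * (Real.pi / (2 * θ)))) * (x ^ (2*φ))
        = x ^ (2*φ-1) * (2*u*Real.sin u^(2*φ-1)*Real.cos u^(1-2*φ)) := by
      rw [hxp, e1, e2, e3, e5, hu_def]
      ring
    have G := aux_g_nonneg hφ hφ' hu
    have hint := mul_le_mul_of_nonneg_left G hxq.le
    show (Real.sin u ^ 2) ^ (φ-1) * (1 - Real.sin u ^ 2) ^ (-φ)
          * (((2:ℕ):ℝ) * Real.sin u ^ (2-1) * (Real.cos u * (Real.pi / (2 * θ)))) * x ^ (2*φ)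
        - (∫ s in (0:ℝ)..(Real.sin u ^ 2), s ^ (φ - 1) * (1 - s) ^ (-φ)) * (2*φ*x^(2*φ-1)) ≤ 0
    norm_num
    rw [hAx]
    linarith [hint]
  apply antitoneOn_of_deriv_nonpos (convex_Ioc 0 θ)
  · -- continuity
    have hmaps : MapsTo (fun x : ℝ => Real.sin (Real.pi * x / (2*θ)) ^ 2) (Ioc 0 θ) (Icc 0 1) :=
      fun x _ => ⟨sq_nonneg _, Real.sin_sq_le_one _⟩
    apply ContinuousOn.div
    · exact (aux_contOn hφ h1).comp
        ((Real.continuous_sin.comp (by continuity)).pow 2).continuousOn hmaps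
    · intro x hx
      exact (Real.continuousAt_rpow_const x (2*φ) (Or.inl (ne_of_gt hx.1))).continuousWithinAt
    · intro x hx
      exact (Real.rpow_pos_of_pos hx.1 _).ne'
  · rw [interior_Ioc]
    intro x hx
    obtain ⟨d, hd, _⟩ := key x hx
    exact hd.differentiableAt.differentiableWithinAt
  · rw [interior_Ioc]
    intro x hx
    obtain ⟨d, hd, hd0⟩ := key x hx
    rw [hd.deriv]
    exact hd0
end

section
/- Let 0 < ψ ≤ π/2, φ = ψ/π, θ > 0, and define h(x) = (θ sin ψ / π) · B_{sin²(πx/(2θ))}(φ, 1−φ) for 0 < x ≤ θ. Then h(x) ≤ θ^(1−2φ) · (sin ψ / ψ) · (π^(2φ)/4^φ) · x^(2φ) for all 0 < x ≤ θ. -/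
open Real MeasureTheory Set

open Filter intervalIntegral


private lemma g_meas {φ : ℝ} :
    Measurable (fun s : ℝ => s ^ (φ - 1) * (1 - s) ^ (-φ)) := by fun_prop

private lemma g_intble {φ : ℝ} (hφ0 : 0 < φ) {t : ℝ} (ht0 : 0 ≤ t) (ht : t < 1) :
    IntervalIntegrable (fun s : ℝ => s ^ (φ - 1) * (1 - s) ^ (-φ)) volume 0 t := by
  have h1t : 0 < 1 - t := by linarith
  refine IntervalIntegrable.mono_fun'
    (g := fun s : ℝ => (1 - t) ^ (-φ) * s ^ (φ - 1)) ?_ ?_ ?_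
  · exact (intervalIntegrable_rpow' (by linarith)).const_mul _
  · exact g_meas.aestronglyMeasurable
  · rw [Set.uIoc_of_le ht0]
    refine Filter.eventually_of_mem (self_mem_ae_restrict measurableSet_Ioc) ?_
    intro s hs
    have hs0 : 0 < s := hs.1
    have hs1 : 0 < 1 - s := by have := hs.2; linarith
    have h1 : (1 - s) ^ (-φ) ≤ (1 - t) ^ (-φ) :=
      Real.rpow_le_rpow_of_nonpos h1t (by linarith [hs.2]) (by linarith)
    have h2 : 0 ≤ s ^ (φ - 1) := Real.rpow_nonneg hs0.le _
    have h3 : 0 ≤ (1 - s) ^ (-φ) := Real.rpow_nonneg hs1.le _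
    show ‖s ^ (φ - 1) * (1 - s) ^ (-φ)‖ ≤ (1 - t) ^ (-φ) * s ^ (φ - 1)
    rw [Real.norm_eq_abs, abs_of_nonneg (mul_nonneg h2 h3)]
    calc s ^ (φ - 1) * (1 - s) ^ (-φ) ≤ s ^ (φ - 1) * (1 - t) ^ (-φ) :=
          mul_le_mul_of_nonneg_left h1 h2
      _ = (1 - t) ^ (-φ) * s ^ (φ - 1) := mul_comm _ _

private lemma key_lt {φ : ℝ} (hφ0 : 0 < φ) (hφ1 : φ ≤ 1/2) {u : ℝ} (hu0 : 0 < u)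
    (hu : u < Real.pi / 2) :
    (∫ s in (0:ℝ)..(Real.sin u ^ 2), s ^ (φ - 1) * (1 - s) ^ (-φ)) ≤ u ^ (2*φ) / φ := by
  set g : ℝ → ℝ := fun s => s ^ (φ - 1) * (1 - s) ^ (-φ) with hgdef
  have hsu0 : 0 < Real.sin u := Real.sin_pos_of_pos_of_lt_pi hu0 (by linarith [Real.pi_pos])
  have hsu1 : Real.sin u < 1 := by
    have := Real.sin_lt_sin_of_lt_of_le_pi_div_two (by linarith) le_rfl hu
    simpa using this
  have ht0 : 0 < Real.sin u ^ 2 := by positivity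
  have ht1 : Real.sin u ^ 2 < 1 := by nlinarith
  set F : ℝ → ℝ := fun v => v ^ (2*φ) / φ - ∫ s in (0:ℝ)..(Real.sin v ^ 2), g s with hF
  have hderiv : ∀ v ∈ Set.Ioo 0 u, HasDerivAt F
      (2*φ*v^(2*φ-1)/φ - g (Real.sin v ^ 2) * (2 * Real.sin v ^ 1 * Real.cos v)) v := by
    intro v hv
    have hv0 : 0 < v := hv.1
    have hvu : v < u := hv.2
    have hsv0 : 0 < Real.sin v := Real.sin_pos_of_pos_of_lt_pi hv0 (by linarith [Real.pi_pos])
    have hsv1 : Real.sin v < Real.sin u :=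
      Real.sin_lt_sin_of_lt_of_le_pi_div_two (by linarith) hu.le hvu
    have htv1 : Real.sin v ^ 2 < 1 := by nlinarith
    have htv0 : 0 < Real.sin v ^ 2 := by positivity
    have h1 : HasDerivAt (fun w : ℝ => w ^ (2*φ) / φ) (2*φ*v^(2*φ-1)/φ) v :=
      (Real.hasDerivAt_rpow_const (Or.inl hv0.ne')).div_const φ
    have h2 : HasDerivAt (fun w : ℝ => Real.sin w ^ 2) (2 * Real.sin v ^ 1 * Real.cos v) v := by
      simpa using (Real.hasDerivAt_sin v).fun_pow 2
    have hcont : ContinuousAt g (Real.sin v ^ 2) := by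
      apply ContinuousAt.mul
      · exact Real.continuousAt_rpow_const _ _ (Or.inl htv0.ne')
      · refine (continuousAt_const.sub continuousAt_id).rpow_const (Or.inl ?_)
        show (1:ℝ) - Real.sin v ^ 2 ≠ 0
        exact ne_of_gt (by linarith)
    have h3 : HasDerivAt (fun t : ℝ => ∫ s in (0:ℝ)..t, g s) (g (Real.sin v ^ 2))
        (Real.sin v ^ 2) :=
      intervalIntegral.integral_hasDerivAt_right (g_intble hφ0 (by positivity) htv1)
        g_meas.aestronglyMeasurable.stronglyMeasurableAtFilter hcont
    have h4 := h3.comp v h2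
    exact h1.sub h4
  have hderiv_nonneg : ∀ v ∈ Set.Ioo 0 u,
      0 ≤ 2*φ*v^(2*φ-1)/φ - g (Real.sin v ^ 2) * (2 * Real.sin v ^ 1 * Real.cos v) := by
    intro v hv
    have hv0 : 0 < v := hv.1
    have hvlt : v < Real.pi / 2 := lt_of_lt_of_le hv.2 hu.le
    have hsv0 : 0 < Real.sin v := Real.sin_pos_of_pos_of_lt_pi hv0 (by linarith [Real.pi_pos])
    have hcv0 : 0 < Real.cos v := Real.cos_pos_of_mem_Ioo ⟨by linarith, hvlt⟩
    set s := Real.sin v with hs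
    set c := Real.cos v with hc
    have hcs : 1 - s ^ 2 = c ^ 2 := (Real.cos_sq' v).symm
    have hkey : g (s ^ 2) * (2 * s ^ 1 * c) = 2 * (s / c) ^ (2*φ - 1) := by
      have e1 : ((s ^ 2 : ℝ)) ^ (φ - 1) = s ^ (2*φ - 2) := by
        rw [← Real.rpow_natCast s 2, ← Real.rpow_mul hsv0.le]
        congr 1 <;> push_cast <;> ring
      have e2 : ((c ^ 2 : ℝ)) ^ (-φ) = c ^ (-(2*φ)) := by
        rw [← Real.rpow_natCast c 2, ← Real.rpow_mul hcv0.le]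
        congr 1 <;> push_cast <;> ring
      have hg2 : g (s ^ 2) = s ^ (2*φ - 2) * c ^ (-(2*φ)) := by
        rw [hgdef]
        simp only
        rw [hcs, e1, e2]
      rw [hg2, Real.div_rpow hsv0.le hcv0.le, ← mul_div_assoc,
        eq_div_iff (ne_of_gt (Real.rpow_pos_of_pos hcv0 _)), pow_one]
      have A : s ^ (2*φ - 2) * s = s ^ (2*φ - 1) := by
        nth_rewrite 2 [← Real.rpow_one s]
        rw [← Real.rpow_add hsv0]
        congr 1 <;> ring
      have B : c ^ (-(2*φ)) * c * c ^ (2*φ - 1) = 1 := by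
        nth_rewrite 2 [← Real.rpow_one c]
        rw [← Real.rpow_add hcv0, ← Real.rpow_add hcv0]
        rw [show -(2*φ) + 1 + (2*φ - 1) = 0 by ring, Real.rpow_zero]
      calc s ^ (2*φ - 2) * c ^ (-(2*φ)) * (2 * s * c) * c ^ (2*φ - 1)
          = 2 * (s ^ (2*φ - 2) * s) * (c ^ (-(2*φ)) * c * c ^ (2*φ - 1)) := by ring
        _ = 2 * s ^ (2*φ - 1) := by rw [A, B, mul_one]
    have htan : v ≤ s / c := by
      rw [← Real.tan_eq_sin_div_cos]
      exact (Real.lt_tan hv0 hvlt).le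
    have hineq : (s / c) ^ (2*φ - 1) ≤ v ^ (2*φ - 1) :=
      Real.rpow_le_rpow_of_nonpos hv0 htan (by linarith)
    have hsimp : 2*φ*v^(2*φ-1)/φ = 2 * v^(2*φ-1) := by
      field_simp
    rw [hkey, hsimp]
    linarith
  have hcontF : ContinuousOn F (Set.Icc 0 u) := by
    apply ContinuousOn.sub
    · exact (continuousOn_id.rpow_const (fun x _ => Or.inr (by positivity))).div_const φ
    · have hP : ContinuousOn (fun t : ℝ => ∫ s in (0:ℝ)..t, g s)
          (Set.uIcc 0 (Real.sin u ^ 2)) :=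
        intervalIntegral.continuousOn_primitive_interval'
          (g_intble hφ0 ht0.le ht1) Set.left_mem_uIcc
      apply hP.comp (Continuous.continuousOn (by continuity))
      intro v hv
      rw [Set.uIcc_of_le ht0.le]
      refine ⟨by positivity, ?_⟩
      have h1 : 0 ≤ Real.sin v :=
        Real.sin_nonneg_of_nonneg_of_le_pi hv.1 (by linarith [Real.pi_pos, hv.2, hu])
      have h2 : Real.sin v ≤ Real.sin u :=
        Real.sin_le_sin_of_le_of_le_pi_div_two (by linarith [hv.1]) hu.le hv.2
      exact pow_le_pow_left₀ h1 h2 2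
  have hmono : MonotoneOn F (Set.Icc 0 u) := by
    apply monotoneOn_of_deriv_nonneg (convex_Icc 0 u) hcontF
    · intro v hv
      rw [interior_Icc] at hv
      exact ((hderiv v hv).differentiableAt).differentiableWithinAt
    · intro v hv
      rw [interior_Icc] at hv
      rw [(hderiv v hv).deriv]
      exact hderiv_nonneg v hv
  have h0u : F 0 ≤ F u :=
    hmono (Set.left_mem_Icc.2 hu0.le) (Set.right_mem_Icc.2 hu0.le) hu0.le
  have hF0 : F 0 = 0 := by
    simp [hF, Real.zero_rpow (by positivity : (2*φ) ≠ 0)]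
  rw [hF0, hF] at h0u
  simp only at h0u
  linarith

private lemma key {φ : ℝ} (hφ0 : 0 < φ) (hφ1 : φ ≤ 1/2) {u : ℝ} (hu0 : 0 < u)
    (hu : u ≤ Real.pi / 2) :
    (∫ s in (0:ℝ)..(Real.sin u ^ 2), s ^ (φ - 1) * (1 - s) ^ (-φ)) ≤ u ^ (2*φ) / φ := by
  rcases lt_or_eq_of_le hu with hlt | heq
  · exact key_lt hφ0 hφ1 hu0 hlt
  · subst heq
    rw [Real.sin_pi_div_two, one_pow]
    by_cases hint : IntervalIntegrable
        (fun s : ℝ => s ^ (φ - 1) * (1 - s) ^ (-φ)) volume 0 1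
    · -- take limit u → π/2 from the left
      have hπ : (0:ℝ) < Real.pi / 2 := by positivity
      set l : Filter ℝ := nhdsWithin (Real.pi/2) (Set.Ioo 0 (Real.pi/2)) with hl
      haveI : l.NeBot := right_nhdsWithin_Ioo_neBot hπ
      have hP : ContinuousOn (fun t : ℝ => ∫ s in (0:ℝ)..t,
          s ^ (φ - 1) * (1 - s) ^ (-φ)) (Set.uIcc 0 1) :=
        intervalIntegral.continuousOn_primitive_interval' hint Set.left_mem_uIcc
      have hcomp : ContinuousOn (fun v : ℝ => ∫ s in (0:ℝ)..(Real.sin v ^ 2),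
          s ^ (φ - 1) * (1 - s) ^ (-φ)) (Set.Icc 0 (Real.pi/2)) := by
        apply hP.comp (Continuous.continuousOn (by continuity))
        intro v hv
        rw [Set.uIcc_of_le (by norm_num : (0:ℝ) ≤ 1)]
        refine ⟨by positivity, ?_⟩
        have h1 := Real.sin_le_one v
        have h2 := Real.neg_one_le_sin v
        show Real.sin v ^ 2 ≤ 1
        nlinarith
      have hmem : (Real.pi/2) ∈ Set.Icc (0:ℝ) (Real.pi/2) := by
        constructor <;> linarith
      have htend1 : Filter.Tendsto (fun v : ℝ => ∫ s in (0:ℝ)..(Real.sin v ^ 2),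
          s ^ (φ - 1) * (1 - s) ^ (-φ)) l
          (nhds (∫ s in (0:ℝ)..((Real.sin (Real.pi/2)) ^ 2), s ^ (φ - 1) * (1 - s) ^ (-φ))) := by
        apply (hcomp (Real.pi/2) hmem).mono_left
        apply nhdsWithin_mono
        exact fun x hx => ⟨hx.1.le, hx.2.le⟩
      have htend2 : Filter.Tendsto (fun v : ℝ => v ^ (2*φ) / φ) l
          (nhds ((Real.pi/2) ^ (2*φ) / φ)) := by
        apply Filter.Tendsto.mono_left _ nhdsWithin_le_nhds
        exact ((Real.continuousAt_rpow_const _ _ (Or.inl hπ.ne')).div_const φ)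
      have hev : ∀ᶠ v in l, (∫ s in (0:ℝ)..(Real.sin v ^ 2),
          s ^ (φ - 1) * (1 - s) ^ (-φ)) ≤ v ^ (2*φ) / φ := by
        filter_upwards [self_mem_nhdsWithin] with v hv
        exact key_lt hφ0 hφ1 hv.1 hv.2
      have := le_of_tendsto_of_tendsto htend1 htend2 hev
      rwa [Real.sin_pi_div_two, one_pow] at this
    · rw [intervalIntegral.integral_undef hint]
      positivity

theorem h_upper_bound (ψ θ : ℝ) (hψ : 0 < ψ) (hψ' : ψ ≤ Real.pi / 2) (hθ : 0 < θ)
    (φ : ℝ) (hφ : φ = ψ / Real.pi) (x : ℝ) (hx : 0 < x) (hx' : x ≤ θ) :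
    θ * Real.sin ψ / Real.pi *
        incBeta φ (1 - φ) (Real.sin (Real.pi * x / (2 * θ)) ^ 2) ≤
      θ ^ (1 - 2 * φ) * (Real.sin ψ / ψ) * (Real.pi ^ (2 * φ) / 4 ^ φ) * x ^ (2 * φ) := by
  have hπ : (0:ℝ) < Real.pi := Real.pi_pos
  have hφ0 : 0 < φ := by rw [hφ]; positivity
  have hφ1 : φ ≤ 1/2 := by
    rw [hφ, div_le_iff₀ hπ]
    linarith
  set u : ℝ := Real.pi * x / (2 * θ) with hu_def
  have hu0 : 0 < u := by positivity
  have hu : u ≤ Real.pi / 2 := by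
    rw [hu_def, div_le_div_iff₀ (by positivity) (by norm_num : (0:ℝ) < 2)]
    nlinarith
  have hkey := key hφ0 hφ1 hu0 hu
  have hIB : incBeta φ (1 - φ) (Real.sin u ^ 2) =
      ∫ s in (0:ℝ)..(Real.sin u ^ 2), s ^ (φ - 1) * (1 - s) ^ (-φ) := by
    rw [incBeta]
    congr 1
    ext s
    rw [show 1 - φ - 1 = -φ by ring]
  have hsψ : 0 < Real.sin ψ := Real.sin_pos_of_pos_of_lt_pi hψ (by linarith)
  have hcoef : 0 ≤ θ * Real.sin ψ / Real.pi := by positivity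
  have step1 : θ * Real.sin ψ / Real.pi * incBeta φ (1 - φ) (Real.sin u ^ 2) ≤
      θ * Real.sin ψ / Real.pi * (u ^ (2*φ) / φ) := by
    rw [hIB]
    exact mul_le_mul_of_nonneg_left hkey hcoef
  refine le_trans step1 (le_of_eq ?_)
  have h24 : (2:ℝ) ^ (2*φ) = 4 ^ φ := by
    rw [Real.rpow_mul (by norm_num : (0:ℝ) ≤ 2)]
    norm_num
  have eu : u ^ (2*φ) = Real.pi ^ (2*φ) * x ^ (2*φ) / (4 ^ φ * θ ^ (2*φ)) := by
    rw [hu_def, Real.div_rpow (by positivity) (by positivity),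
      Real.mul_rpow hπ.le hx.le, Real.mul_rpow (by norm_num : (0:ℝ) ≤ 2) hθ.le, h24]
  have eθ : θ ^ (1 - 2*φ) = θ * (θ ^ (2*φ))⁻¹ := by
    rw [Real.rpow_sub hθ, Real.rpow_one, div_eq_mul_inv]
  have hψφ : ψ = Real.pi * φ := by
    rw [hφ]
    field_simp
  rw [eu, eθ, hψφ]
  have hθ2 : (0:ℝ) < θ ^ (2*φ) := Real.rpow_pos_of_pos hθ _
  have h4 : (0:ℝ) < 4 ^ φ := Real.rpow_pos_of_pos (by norm_num) _
  field_simp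
end

section
/- Let 0 < ψ ≤ π/2, φ = ψ/π, θ > 0, and h(x) = (θ sin ψ / π) · B_{sin²(πx/(2θ))}(φ, 1−φ). Then h is strictly increasing on (0, θ], maps (0, θ] onto (0, θ], and its inverse satisfies h^(−1)(t) ≥ (2/π)·(ψ/sin ψ)^(1/(2φ)) · θ^(1−1/(2φ)) · t^(1/(2φ)) for all t ∈ (0, θ]. -/
open Real MeasureTheory Set

/-- `h(x) = (θ sin ψ / π) B_{sin²(πx/(2θ))}(φ, 1-φ)`. -/
noncomputable def hFn (ψ θ φ x : ℝ) : ℝ :=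
  θ * Real.sin ψ / Real.pi * incBeta φ (1 - φ) (Real.sin (Real.pi * x / (2 * θ)) ^ 2)

namespace HFnAux

/-- The beta integrand. -/
noncomputable def bInt (φ : ℝ) : ℝ → ℝ := fun s => s ^ (φ - 1) * (1 - s) ^ ((1 - φ) - 1)

lemma incBeta_eq (φ x : ℝ) : incBeta φ (1 - φ) x = ∫ s in (0:ℝ)..x, bInt φ s := rfl

lemma bInt_pos {φ : ℝ} (hφ0 : 0 < φ) {s : ℝ} (hs0 : 0 < s) (hs1 : s < 1) :
    0 < bInt φ s := by
  have h1 : (0:ℝ) < 1 - s := by linarith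
  exact mul_pos (Real.rpow_pos_of_pos hs0 _) (Real.rpow_pos_of_pos h1 _)

lemma bInt_continuousOn {φ : ℝ} : ContinuousOn (bInt φ) (Ioo 0 1) := by
  intro s hs
  have h1 : ContinuousAt (fun t : ℝ => t ^ (φ - 1)) s :=
    Real.continuousAt_rpow_const s _ (Or.inl hs.1.ne')
  have h2 : ContinuousAt (fun t : ℝ => (1 - t) ^ ((1 - φ) - 1)) s := by
    have : (1 : ℝ) - s ≠ 0 := by have := hs.2; intro h; linarith [hs.2]
    exact ContinuousAt.rpow_const (continuousAt_const.sub continuousAt_id) (Or.inl this)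
  exact (h1.mul h2).continuousWithinAt

lemma key_eq {φ : ℝ} {x : ℝ} (hx0 : 0 ≤ x) (hx1 : x ≤ 1) :
    (x:ℂ) ^ ((φ:ℂ) - 1) * (1 - (x:ℂ)) ^ ((1 - (φ:ℂ)) - 1) = ((bInt φ x : ℝ) : ℂ) := by
  have h1 : (0:ℝ) ≤ 1 - x := by linarith
  rw [bInt]
  push_cast
  rw [Complex.ofReal_cpow hx0, Complex.ofReal_cpow h1]
  push_cast
  ring_nf

lemma bInt_integrableOn {φ : ℝ} (hφ0 : 0 < φ) (hφ1 : φ < 1) :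
    IntegrableOn (bInt φ) (Ioc 0 1) := by
  have hc : IntervalIntegrable
      (fun x : ℝ => (x:ℂ) ^ ((φ:ℂ) - 1) * (1 - (x:ℂ)) ^ ((1 - (φ:ℂ)) - 1)) volume 0 1 := by
    apply Complex.betaIntegral_convergent <;> simp [hφ0, hφ1, sub_pos]
  rw [intervalIntegrable_iff_integrableOn_Ioc_of_le (by norm_num : (0:ℝ) ≤ 1)] at hc
  have hre : IntegrableOn
      (fun x : ℝ => ((x:ℂ) ^ ((φ:ℂ) - 1) * (1 - (x:ℂ)) ^ ((1 - (φ:ℂ)) - 1)).re) (Ioc 0 1) :=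
    hc.re
  refine hre.congr_fun (fun x hx => ?_) measurableSet_Ioc
  beta_reduce
  rw [key_eq hx.1.le hx.2, Complex.ofReal_re]

lemma bInt_intervalIntegrable {φ : ℝ} (hφ0 : 0 < φ) (hφ1 : φ < 1) {a b : ℝ}
    (ha : 0 ≤ a) (hab : a ≤ b) (hb : b ≤ 1) :
    IntervalIntegrable (bInt φ) volume a b := by
  rw [intervalIntegrable_iff_integrableOn_Ioc_of_le hab]
  exact (bInt_integrableOn hφ0 hφ1).mono_set (Ioc_subset_Ioc ha hb)

lemma incBeta_one {φ : ℝ} (hφ0 : 0 < φ) (hφ1 : φ < 1) :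
    incBeta φ (1 - φ) 1 = Real.pi / Real.sin (Real.pi * φ) := by
  have hG : Complex.Gamma φ * Complex.Gamma (1 - φ) =
      Complex.Gamma ((φ:ℂ) + (1 - φ)) * Complex.betaIntegral φ (1 - φ) := by
    apply Complex.Gamma_mul_Gamma_eq_betaIntegral <;> simp [hφ0, hφ1, sub_pos]
  have hGone : ((φ:ℂ) + (1 - φ)) = 1 := by ring
  rw [hGone, Complex.Gamma_one, one_mul, Complex.Gamma_mul_Gamma_one_sub] at hG
  have hbeta : Complex.betaIntegral φ (1 - φ) = ((incBeta φ (1 - φ) 1 : ℝ) : ℂ) := by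
    rw [Complex.betaIntegral, incBeta_eq]
    rw [show (∫ x : ℝ in (0:ℝ)..1, (x:ℂ) ^ ((φ:ℂ) - 1) * (1 - (x:ℂ)) ^ ((1 - (φ:ℂ)) - 1))
        = ∫ x : ℝ in (0:ℝ)..1, ((bInt φ x : ℝ) : ℂ) from
      intervalIntegral.integral_congr (fun x hx => by
        rw [uIcc_of_le (by norm_num : (0:ℝ) ≤ 1)] at hx
        exact key_eq hx.1 hx.2)]
    exact intervalIntegral.integral_ofReal
  rw [hbeta] at hG
  have hsin : Complex.sin ((Real.pi : ℂ) * (φ:ℂ)) = ((Real.sin (Real.pi * φ) : ℝ) : ℂ) := by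
    rw [← Complex.ofReal_mul, Complex.ofReal_sin]
  have : ((Real.pi / Real.sin (Real.pi * φ) : ℝ) : ℂ) = ((incBeta φ (1 - φ) 1 : ℝ) : ℂ) := by
    rw [Complex.ofReal_div]
    rw [← hG, hsin]
  exact_mod_cast this.symm

lemma incBeta_zero (φ : ℝ) : incBeta φ (1 - φ) 0 = 0 := by
  simp [incBeta]

lemma incBeta_continuousOn {φ : ℝ} (hφ0 : 0 < φ) (hφ1 : φ < 1) :
    ContinuousOn (fun y => incBeta φ (1 - φ) y) (Icc 0 1) := by
  have h : IntegrableOn (bInt φ) (uIcc (0:ℝ) 1) := by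
    rw [uIcc_of_le (by norm_num : (0:ℝ) ≤ 1),
      integrableOn_Icc_iff_integrableOn_Ioc]
    exact bInt_integrableOn hφ0 hφ1
  have := intervalIntegral.continuousOn_primitive_interval (a := 0) (b := 1)
    (μ := volume) (f := bInt φ) h
  rw [uIcc_of_le (by norm_num : (0:ℝ) ≤ 1)] at this
  exact this

lemma incBeta_strictMonoOn {φ : ℝ} (hφ0 : 0 < φ) (hφ1 : φ < 1) :
    StrictMonoOn (fun y => incBeta φ (1 - φ) y) (Icc 0 1) := by
  intro y1 hy1 y2 hy2 h12
  have i1 : IntervalIntegrable (bInt φ) volume 0 y1 :=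
    bInt_intervalIntegrable hφ0 hφ1 le_rfl hy1.1 hy1.2
  have i2 : IntervalIntegrable (bInt φ) volume y1 y2 :=
    bInt_intervalIntegrable hφ0 hφ1 hy1.1 h12.le hy2.2
  have hadd : incBeta φ (1 - φ) y1 + ∫ s in y1..y2, bInt φ s = incBeta φ (1 - φ) y2 :=
    intervalIntegral.integral_add_adjacent_intervals i1 i2
  have hpos : 0 < ∫ s in y1..y2, bInt φ s := by
    apply intervalIntegral.intervalIntegral_pos_of_pos_on i2 _ h12
    intro x hx
    exact bInt_pos hφ0 (lt_of_le_of_lt hy1.1 hx.1) (lt_of_lt_of_le hx.2 hy2.2)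
  simp only
  linarith

lemma incBeta_hasDerivAt {φ : ℝ} (hφ0 : 0 < φ) (hφ1 : φ < 1) {y : ℝ}
    (hy : y ∈ Ioo (0:ℝ) 1) :
    HasDerivAt (fun y => incBeta φ (1 - φ) y) (bInt φ y) y := by
  apply intervalIntegral.integral_hasDerivAt_right
    (bInt_intervalIntegrable hφ0 hφ1 le_rfl hy.1.le hy.2.le)
  · exact ⟨Ioo 0 1, Ioo_mem_nhds hy.1 hy.2,
      (bInt_continuousOn).aestronglyMeasurable measurableSet_Ioo⟩
  · exact bInt_continuousOn.continuousAt (Ioo_mem_nhds hy.1 hy.2)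

/-- The core upper bound: `B_{sin² u}(φ,1-φ) ≤ u^(2φ)/φ` for `u ∈ [0, π/2]`. -/
lemma incBeta_sin_sq_le {φ : ℝ} (hφ0 : 0 < φ) (hφ2 : φ ≤ 1/2) {u : ℝ}
    (hu : u ∈ Icc 0 (Real.pi/2)) :
    incBeta φ (1 - φ) (Real.sin u ^ 2) ≤ u ^ (2*φ) / φ := by
  have hφ1 : φ < 1 := lt_of_le_of_lt hφ2 (by norm_num)
  set F : ℝ → ℝ := fun u => u ^ (2*φ) / φ - incBeta φ (1 - φ) (Real.sin u ^ 2) with hF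
  have hmapsTo : ∀ v ∈ Icc (0:ℝ) (Real.pi/2), Real.sin v ^ 2 ∈ Icc (0:ℝ) 1 := by
    intro v hv
    constructor
    · positivity
    · have h1 : Real.sin v ≤ 1 := Real.sin_le_one v
      have h0 : 0 ≤ Real.sin v := Real.sin_nonneg_of_nonneg_of_le_pi hv.1
        (le_trans hv.2 (by linarith [Real.pi_pos]))
      nlinarith
  have hmono : MonotoneOn F (Icc 0 (Real.pi/2)) := by
    apply monotoneOn_of_deriv_nonneg (convex_Icc _ _)
    · -- continuity
      apply ContinuousOn.sub
      · apply ContinuousOn.div_const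
        intro v _
        exact (Real.continuousAt_rpow_const v _ (Or.inr (by positivity))).continuousWithinAt
      · exact (incBeta_continuousOn hφ0 hφ1).comp
          ((Real.continuous_sin.pow 2).continuousOn) hmapsTo
    all_goals
      rw [interior_Icc]
      intro v hv
      have hv0 : 0 < v := hv.1
      have hvπ : v < Real.pi/2 := hv.2
      have hsin0 : 0 < Real.sin v := Real.sin_pos_of_pos_of_lt_pi hv0
        (lt_trans hvπ (by linarith [Real.pi_pos]))
      have hcos0 : 0 < Real.cos v := Real.cos_pos_of_mem_Ioo ⟨by linarith, hvπ⟩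
      have hsin1 : Real.sin v < 1 := by
        have := Real.strictMonoOn_sin
          (Set.mem_Icc.mpr ⟨by linarith, by linarith⟩)
          (Set.mem_Icc.mpr ⟨by linarith, le_rfl⟩) hvπ
        rwa [Real.sin_pi_div_two] at this
      have hmem : Real.sin v ^ 2 ∈ Ioo (0:ℝ) 1 := by
        constructor
        · positivity
        · nlinarith
      have hd1 : HasDerivAt (fun u : ℝ => u ^ (2*φ) / φ) (2*φ * v ^ (2*φ - 1) / φ) v :=
        (Real.hasDerivAt_rpow_const (Or.inl hv0.ne')).div_const φ
      have hd2 : HasDerivAt (fun u : ℝ => incBeta φ (1 - φ) (Real.sin u ^ 2))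
          (bInt φ (Real.sin v ^ 2) * (2 * Real.sin v ^ 1 * Real.cos v)) v := by
        have hinner : HasDerivAt (fun u : ℝ => Real.sin u ^ 2)
            (2 * Real.sin v ^ 1 * Real.cos v) v := by
          have := (Real.hasDerivAt_sin v).fun_pow 2
          simpa using this
        exact (incBeta_hasDerivAt hφ0 hφ1 hmem).comp v hinner
      have hdF : HasDerivAt F
          (2*φ * v ^ (2*φ - 1) / φ - bInt φ (Real.sin v ^ 2) * (2 * Real.sin v ^ 1 * Real.cos v))
          v := hd1.sub hd2
      first
      | exact hdF.differentiableAt.differentiableWithinAt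
      | · rw [hdF.deriv]
          have key : bInt φ (Real.sin v ^ 2) * (2 * Real.sin v ^ 1 * Real.cos v)
              ≤ 2 * v ^ (2*φ - 1) := by
            have htan : v ≤ Real.tan v := (Real.lt_tan hv0 hvπ).le
            have htan0 : 0 < Real.tan v := lt_of_lt_of_le hv0 htan
            have hb : bInt φ (Real.sin v ^ 2)
                = Real.sin v ^ (2*(φ-1)) * Real.cos v ^ (2*(-φ)) := by
              rw [bInt]
              have e1 : (Real.sin v ^ 2 : ℝ) ^ (φ - 1) = Real.sin v ^ (2*(φ-1)) := by
                rw [← Real.rpow_natCast (Real.sin v) 2, ← Real.rpow_mul hsin0.le]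
                norm_num
              have e2 : ((1 : ℝ) - Real.sin v ^ 2) ^ ((1-φ) - 1)
                  = Real.cos v ^ (2*(-φ)) := by
                have : (1 : ℝ) - Real.sin v ^ 2 = Real.cos v ^ 2 := by
                  have := Real.sin_sq_add_cos_sq v; linarith
                rw [this, ← Real.rpow_natCast (Real.cos v) 2, ← Real.rpow_mul hcos0.le]
                ring_nf
              rw [e1, e2]
            rw [hb]
            have t1 : Real.tan v ^ (2*φ - 1)
                = Real.sin v ^ (2*φ - 1) * Real.cos v ^ (-(2*φ - 1)) := by
              rw [Real.tan_eq_sin_div_cos, Real.div_rpow hsin0.le hcos0.le,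
                Real.rpow_neg hcos0.le, div_eq_mul_inv]
            have s1 : Real.sin v ^ (2*(φ-1)) * Real.sin v = Real.sin v ^ (2*φ - 1) := by
              rw [← Real.rpow_add_one hsin0.ne']
              congr 1; ring
            have c1 : Real.cos v ^ (2*(-φ)) * Real.cos v = Real.cos v ^ (-(2*φ - 1)) := by
              rw [← Real.rpow_add_one hcos0.ne']
              congr 1; ring
            have lhs_eq : Real.sin v ^ (2*(φ-1)) * Real.cos v ^ (2*(-φ))
                * (2 * Real.sin v ^ 1 * Real.cos v)
                = 2 * Real.tan v ^ (2*φ - 1) := by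
              rw [t1]
              rw [← s1, ← c1]
              rw [pow_one]; ring
            rw [lhs_eq]
            have : Real.tan v ^ (2*φ - 1) ≤ v ^ (2*φ - 1) :=
              Real.rpow_le_rpow_of_nonpos hv0 htan (by linarith)
            linarith
          have : 2*φ * v ^ (2*φ - 1) / φ = 2 * v ^ (2*φ - 1) := by
            field_simp
          rw [this]
          linarith [key]
  have h0 : F 0 = 0 := by
    simp [hF, incBeta_zero, Real.zero_rpow (by positivity : (2*φ) ≠ 0)]
  have := hmono (left_mem_Icc.mpr (by linarith [Real.pi_pos])) hu hu.1
  rw [h0] at this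
  simpa [hF, sub_nonneg] using this

end HFnAux

open HFnAux

theorem hFn_strictMono_image_and_inverse_bound (ψ θ : ℝ) (hψ : 0 < ψ)
    (hψ' : ψ ≤ Real.pi / 2) (hθ : 0 < θ) (φ : ℝ) (hφ : φ = ψ / Real.pi) :
    StrictMonoOn (hFn ψ θ φ) (Set.Ioc 0 θ) ∧
    hFn ψ θ φ '' Set.Ioc 0 θ = Set.Ioc 0 θ ∧
    -- the bound on the inverse: for `t = h(x)` one has
    -- `h⁻¹(t) = x ≥ (2/π) (ψ/sin ψ)^{1/(2φ)} θ^{1-1/(2φ)} t^{1/(2φ)}`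
    ∀ x ∈ Set.Ioc 0 θ,
      x ≥ 2 / Real.pi * (ψ / Real.sin ψ) ^ (1 / (2 * φ)) * θ ^ (1 - 1 / (2 * φ)) *
        hFn ψ θ φ x ^ (1 / (2 * φ)) := by
  have hπ : 0 < Real.pi := Real.pi_pos
  have hψπ : ψ = Real.pi * φ := by rw [hφ]; field_simp
  have hφ0 : 0 < φ := by rw [hφ]; positivity
  have hφ2 : φ ≤ 1/2 := by
    rw [hφ, div_le_iff₀ hπ]; linarith
  have hφ1 : φ < 1 := lt_of_le_of_lt hφ2 (by norm_num)
  have hsψ : 0 < Real.sin ψ := Real.sin_pos_of_pos_of_lt_pi hψ (by linarith)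
  have hc : 0 < θ * Real.sin ψ / Real.pi := by positivity
  -- the map σ x = sin(πx/(2θ))²
  set σ : ℝ → ℝ := fun x => Real.sin (Real.pi * x / (2 * θ)) ^ 2 with hσ
  have hu_mem : ∀ x ∈ Icc (0:ℝ) θ, Real.pi * x / (2*θ) ∈ Icc 0 (Real.pi/2) := by
    intro x hx
    constructor
    · have := hx.1; positivity
    · rw [div_le_iff₀ (by positivity)]
      calc Real.pi * x ≤ Real.pi * θ := by nlinarith [hx.2]
        _ = Real.pi / 2 * (2 * θ) := by ring
  have hσ_mem : ∀ x ∈ Icc (0:ℝ) θ, σ x ∈ Icc (0:ℝ) 1 := by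
    intro x hx
    have hu := hu_mem x hx
    constructor
    · positivity
    · have h1 : Real.sin (Real.pi * x / (2*θ)) ≤ 1 := Real.sin_le_one _
      have h0 : 0 ≤ Real.sin (Real.pi * x / (2*θ)) :=
        Real.sin_nonneg_of_nonneg_of_le_pi hu.1 (le_trans hu.2 (by linarith))
      simp only [hσ]; nlinarith
  have hσ_mono : StrictMonoOn σ (Icc 0 θ) := by
    intro x1 hx1 x2 hx2 h12
    have hu1 := hu_mem x1 hx1
    have hu2 := hu_mem x2 hx2
    have hlt : Real.pi * x1 / (2*θ) < Real.pi * x2 / (2*θ) := by gcongr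
    have hsin_lt : Real.sin (Real.pi * x1 / (2*θ)) < Real.sin (Real.pi * x2 / (2*θ)) :=
      Real.strictMonoOn_sin ⟨by linarith [hu1.1], by linarith [hu1.2]⟩
        ⟨by linarith [hu2.1], by linarith [hu2.2]⟩ hlt
    have hsin0 : 0 ≤ Real.sin (Real.pi * x1 / (2*θ)) :=
      Real.sin_nonneg_of_nonneg_of_le_pi hu1.1 (le_trans hu1.2 (by linarith))
    exact pow_lt_pow_left₀ hsin_lt hsin0 two_ne_zero
  have hFn_eq : ∀ x, hFn ψ θ φ x = θ * Real.sin ψ / Real.pi * incBeta φ (1 - φ) (σ x) :=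
    fun x => rfl
  have hmonoIcc : StrictMonoOn (hFn ψ θ φ) (Icc 0 θ) := by
    intro x1 hx1 x2 hx2 h12
    rw [hFn_eq, hFn_eq]
    exact mul_lt_mul_of_pos_left
      (incBeta_strictMonoOn hφ0 hφ1 (hσ_mem x1 hx1) (hσ_mem x2 hx2) (hσ_mono hx1 hx2 h12)) hc
  have h0 : hFn ψ θ φ 0 = 0 := by
    rw [hFn_eq]
    have : σ 0 = 0 := by simp [hσ]
    rw [this, incBeta_zero, mul_zero]
  have hθval : hFn ψ θ φ θ = θ := by
    rw [hFn_eq]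
    have : σ θ = 1 := by
      have : Real.pi * θ / (2 * θ) = Real.pi / 2 := by
        field_simp
      simp [hσ, this, Real.sin_pi_div_two]
    rw [this, incBeta_one hφ0 hφ1, ← hψπ]
    field_simp
  have hcont : ContinuousOn (hFn ψ θ φ) (Icc 0 θ) := by
    have : ContinuousOn (fun x => θ * Real.sin ψ / Real.pi * incBeta φ (1 - φ) (σ x))
        (Icc 0 θ) := by
      apply ContinuousOn.mul continuousOn_const
      have hσcont : Continuous σ :=
        (Real.continuous_sin.comp
          ((continuous_const.mul continuous_id).div_const _)).pow 2
      exact (incBeta_continuousOn hφ0 hφ1).comp hσcont.continuousOn hσ_mem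
    exact this
  have hpos : ∀ x ∈ Ioc (0:ℝ) θ, 0 < hFn ψ θ φ x := by
    intro x hx
    have := hmonoIcc (left_mem_Icc.mpr hθ.le) ⟨hx.1.le, hx.2⟩ hx.1
    rwa [h0] at this
  refine ⟨hmonoIcc.mono Ioc_subset_Icc_self, ?_, ?_⟩
  · -- image
    apply Subset.antisymm
    · rintro t ⟨x, hx, rfl⟩
      refine ⟨hpos x hx, ?_⟩
      rcases eq_or_lt_of_le hx.2 with h | h
      · rw [h, hθval]
      · have h2 := (hmonoIcc ⟨hx.1.le, hx.2⟩ (right_mem_Icc.mpr hθ.le) h).le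
        rwa [hθval] at h2
    · intro t ht
      have := intermediate_value_Ioc hθ.le hcont
      rw [h0, hθval] at this
      exact this ht
  · -- inverse bound
    intro x hx
    have hx0 : 0 < x := hx.1
    set u : ℝ := Real.pi * x / (2 * θ) with hu_def
    have hu : u ∈ Icc 0 (Real.pi/2) := hu_mem x ⟨hx.1.le, hx.2⟩
    have hu0 : 0 < u := by rw [hu_def]; positivity
    set e : ℝ := 1 / (2 * φ) with he_def
    have he : 0 < e := by rw [he_def]; positivity
    set A : ℝ := θ * Real.sin ψ / ψ with hA_def
    have hA0 : 0 < A := by rw [hA_def]; positivity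
    have h2 : hFn ψ θ φ x ≤ A * u ^ (2*φ) := by
      rw [hFn_eq]
      calc θ * Real.sin ψ / Real.pi * incBeta φ (1 - φ) (σ x)
          ≤ θ * Real.sin ψ / Real.pi * (u ^ (2*φ) / φ) := by
            apply mul_le_mul_of_nonneg_left _ (by positivity)
            exact incBeta_sin_sq_le hφ0 hφ2 hu
        _ = A * u ^ (2*φ) := by
            rw [hA_def, hψπ]
            field_simp
            try ring
    have h3 : hFn ψ θ φ x ^ e ≤ (A * u ^ (2*φ)) ^ e :=
      Real.rpow_le_rpow (hpos x hx).le h2 he.le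
    have h4 : (A * u ^ (2*φ)) ^ e = A ^ e * u := by
      rw [Real.mul_rpow hA0.le (Real.rpow_nonneg hu0.le _)]
      congr 1
      rw [← Real.rpow_mul hu0.le]
      have : 2 * φ * e = 1 := by
        rw [he_def]; field_simp
      rw [this, Real.rpow_one]
    have hcoef : 0 ≤ 2 / Real.pi * (ψ / Real.sin ψ) ^ e * θ ^ (1 - e) := by positivity
    have hkey : 2 / Real.pi * (ψ / Real.sin ψ) ^ e * θ ^ (1 - e) * (A ^ e * u) = x := by
      have hAe : (ψ / Real.sin ψ) ^ e * A ^ e = θ ^ e := by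
        rw [← Real.mul_rpow (by positivity) hA0.le]
        congr 1
        rw [hA_def]
        field_simp
        try ring
      have hθe : θ ^ (1 - e) * θ ^ e = θ := by
        rw [← Real.rpow_add hθ]
        norm_num
      calc 2 / Real.pi * (ψ / Real.sin ψ) ^ e * θ ^ (1 - e) * (A ^ e * u)
          = 2 / Real.pi * (θ ^ (1-e) * ((ψ / Real.sin ψ) ^ e * A ^ e)) * u := by ring
        _ = 2 / Real.pi * θ * u := by rw [hAe, hθe]
        _ = x := by rw [hu_def]; field_simp
    calc 2 / Real.pi * (ψ / Real.sin ψ) ^ e * θ ^ (1 - e) * hFn ψ θ φ x ^ e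
        ≤ 2 / Real.pi * (ψ / Real.sin ψ) ^ e * θ ^ (1 - e) * (A ^ e * u) := by
          apply mul_le_mul_of_nonneg_left _ hcoef
          exact le_trans h3 (le_of_eq h4)
      _ = x := hkey
end

section
/- For 0 < a < 1/2 and 0 < t ≤ π/2, one has a·B_{sin² t}(a, 1−a) ≥ t·(cot t)^(1−2a). -/
open Real MeasureTheory Set

private lemma myIntInt {a : ℝ} (ha : 0 < a) {x : ℝ} (hx0 : 0 ≤ x) (hx1 : x < 1) :
    IntervalIntegrable (fun s : ℝ => s ^ (a - 1) * (1 - s) ^ (1 - a - 1)) volume 0 x := by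
  apply IntervalIntegrable.mul_continuousOn (intervalIntegral.intervalIntegrable_rpow' (by linarith))
  apply ContinuousOn.rpow_const
  · exact (continuous_const.sub continuous_id).continuousOn
  · intro s hs
    rw [uIcc_of_le hx0] at hs
    left
    have := hs.2
    intro h
    linarith [sub_eq_zero.mp h]

private lemma rpow_calc {a s c : ℝ} (hs : 0 < s) (hc : 0 < c) :
    (s ^ 2) ^ (a - 1) * (c ^ 2) ^ (1 - a - 1) * (2 * s * c) = 2 * (c / s) ^ (1 - 2 * a) := by
  have h1 : (s ^ 2 : ℝ) ^ (a - 1) = Real.exp ((2 * Real.log s) * (a - 1)) := by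
    rw [Real.rpow_def_of_pos (by positivity), Real.log_pow]; norm_num
  have h2 : (c ^ 2 : ℝ) ^ (1 - a - 1) = Real.exp ((2 * Real.log c) * (1 - a - 1)) := by
    rw [Real.rpow_def_of_pos (by positivity), Real.log_pow]; norm_num
  have h3 : (c / s) ^ (1 - 2 * a) = Real.exp ((Real.log c - Real.log s) * (1 - 2 * a)) := by
    rw [Real.rpow_def_of_pos (by positivity), Real.log_div hc.ne' hs.ne']
  have h4 : s = Real.exp (Real.log s) := (Real.exp_log hs).symm
  have h5 : c = Real.exp (Real.log c) := (Real.exp_log hc).symm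
  rw [h1, h2, h3,
    show 2 * s * c = 2 * Real.exp (Real.log s + Real.log c) from by
      rw [Real.exp_add, Real.exp_log hs, Real.exp_log hc]; ring]
  rw [← Real.exp_add, mul_left_comm, ← Real.exp_add]
  congr 1
  ring

set_option maxHeartbeats 1000000 in
theorem incBeta_sin_sq_ge_cot (a t : ℝ) (ha : 0 < a) (ha' : a < 1 / 2)
    (ht : 0 < t) (ht' : t ≤ Real.pi / 2) :
    a * incBeta a (1 - a) (Real.sin t ^ 2) ≥
      t * (Real.cos t / Real.sin t) ^ (1 - 2 * a) := by
  rcases eq_or_lt_of_le ht' with h2 | h2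
  · -- t = π/2 : RHS is zero
    rw [h2, Real.cos_pi_div_two]
    rw [show (0:ℝ) / Real.sin (Real.pi/2) = 0 by simp]
    rw [Real.zero_rpow (by linarith), mul_zero, ge_iff_le]
    apply mul_nonneg ha.le
    apply intervalIntegral.integral_nonneg (by positivity)
    intro s hs
    rw [Real.sin_pi_div_two, one_pow] at hs
    apply mul_nonneg <;> apply Real.rpow_nonneg
    · exact hs.1
    · linarith [hs.2]
  -- now t < π/2
  set f : ℝ → ℝ := fun s => s ^ (a - 1) * (1 - s) ^ (1 - a - 1) with hf
  set F : ℝ → ℝ := fun u =>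
    a * (∫ s in (0:ℝ)..(Real.sin u ^ 2), f s) - u * (Real.cos u / Real.sin u) ^ (1 - 2 * a)
    with hF
  have hπ := Real.pi_pos
  have hsin_t : 0 < Real.sin t := Real.sin_pos_of_pos_of_lt_pi ht (by linarith)
  have hcos_t : 0 < Real.cos t := Real.cos_pos_of_mem_Ioo ⟨by linarith, h2⟩
  have hX1 : Real.sin t ^ 2 < 1 := by
    nlinarith [Real.sin_sq_add_cos_sq t]
  have hX0 : 0 ≤ Real.sin t ^ 2 := sq_nonneg _
  -- continuity of F on Icc 0 t
  have hcontF : ContinuousOn F (Icc 0 t) := by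
    apply ContinuousOn.sub
    · apply ContinuousOn.mul continuousOn_const
      have hprim : ContinuousOn (fun x => ∫ s in (0:ℝ)..x, f s) (uIcc 0 (Real.sin t ^ 2)) :=
        intervalIntegral.continuousOn_primitive_interval' (myIntInt ha hX0 hX1) left_mem_uIcc
      apply hprim.comp ((Real.continuous_sin.pow 2).continuousOn)
      intro u hu
      rw [uIcc_of_le hX0]
      have hsu : 0 ≤ Real.sin u := Real.sin_nonneg_of_nonneg_of_le_pi hu.1 (by linarith [hu.2])
      have : Real.sin u ≤ Real.sin t := by
        apply Real.sin_le_sin_of_le_of_le_pi_div_two (by linarith [hu.1]) h2.le hu.2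
      refine ⟨sq_nonneg _, ?_⟩
      show Real.sin u ^ 2 ≤ Real.sin t ^ 2
      nlinarith
    · intro u hu
      rcases eq_or_lt_of_le hu.1 with h0 | h0
      · -- continuity at 0 via squeeze
        rw [← h0]
        have key : ∀ v ∈ Icc (0:ℝ) t, v * (Real.cos v / Real.sin v) ^ (1 - 2 * a) ≤ v ^ (2 * a) := by
          intro v hv
          rcases eq_or_lt_of_le hv.1 with hv0 | hv0
          · rw [← hv0]; simp [Real.zero_rpow (by linarith : (2:ℝ) * a ≠ 0)]
          · have hsv : 0 < Real.sin v := Real.sin_pos_of_pos_of_lt_pi hv0 (by linarith [hv.2])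
            have hcv : 0 < Real.cos v := Real.cos_pos_of_mem_Ioo ⟨by linarith, by linarith [hv.2]⟩
            have htan : v < Real.tan v := Real.lt_tan hv0 (by linarith [hv.2])
            have hcot : Real.cos v / Real.sin v ≤ 1 / v := by
              rw [div_le_div_iff₀ hsv hv0]
              have := Real.tan_eq_sin_div_cos v
              rw [this] at htan
              calc Real.cos v * v ≤ Real.cos v * (Real.sin v / Real.cos v) := by
                    exact mul_le_mul_of_nonneg_left htan.le hcv.le
                _ = Real.sin v := by field_simp
                _ = 1 * Real.sin v := (one_mul _).symm
            calc v * (Real.cos v / Real.sin v) ^ (1 - 2 * a)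
                ≤ v * (1 / v) ^ (1 - 2 * a) := by
                  apply mul_le_mul_of_nonneg_left _ hv0.le
                  exact Real.rpow_le_rpow (by positivity) hcot (by linarith)
              _ = v ^ (2 * a) := by
                  rw [one_div, Real.inv_rpow hv0.le, ← Real.rpow_neg hv0.le]
                  nth_rewrite 1 [← Real.rpow_one v]
                  rw [← Real.rpow_add hv0]
                  norm_num
          
        have h0eq : (0:ℝ) * (Real.cos 0 / Real.sin 0) ^ (1 - 2 * a) = 0 := by simp
        rw [ContinuousWithinAt, h0eq]
        apply squeeze_zero' (g := fun v => v ^ (2 * a))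
        · filter_upwards [self_mem_nhdsWithin] with v hv
          have hsv : 0 ≤ Real.sin v := Real.sin_nonneg_of_nonneg_of_le_pi hv.1 (by linarith [hv.2])
          have : (0:ℝ) ≤ (Real.cos v / Real.sin v) ^ (1 - 2 * a) := by
            rcases eq_or_lt_of_le hsv with h | h
            · rw [← h]; simp; positivity
            · have hcv : 0 ≤ Real.cos v := (Real.cos_nonneg_of_mem_Icc ⟨by linarith [hv.1], by linarith [hv.2]⟩)
              positivity
          exact mul_nonneg hv.1 this
        · filter_upwards [self_mem_nhdsWithin] with v hv using key v hv
        · have : Filter.Tendsto (fun v : ℝ => v ^ (2 * a)) (nhds 0) (nhds ((0:ℝ) ^ (2 * a))) :=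
            (Real.continuousAt_rpow_const 0 (2 * a) (Or.inr (by linarith))).tendsto
          rw [Real.zero_rpow (by linarith : (2:ℝ) * a ≠ 0)] at this
          exact this.mono_left nhdsWithin_le_nhds
      · -- continuity at u > 0
        apply ContinuousAt.continuousWithinAt
        have hsu : 0 < Real.sin u := Real.sin_pos_of_pos_of_lt_pi h0 (by linarith [hu.2])
        apply continuousAt_id.mul
        apply ContinuousAt.rpow_const
        · exact Real.continuous_cos.continuousAt.div Real.continuous_sin.continuousAt hsu.ne'
        · left
          have hcu : 0 < Real.cos u := Real.cos_pos_of_mem_Ioo ⟨by linarith, by linarith [hu.2]⟩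
          positivity
  -- derivative of F on (0, t)
  have hderiv : ∀ u ∈ Ioo (0:ℝ) t,
      HasDerivAt F ((1 - 2 * a) * ((Real.cos u / Real.sin u) ^ (-(2 * a)) *
        ((u - Real.sin u * Real.cos u) / Real.sin u ^ 2))) u := by
    intro u hu
    have hsu : 0 < Real.sin u := Real.sin_pos_of_pos_of_lt_pi hu.1 (by linarith [hu.2])
    have hcu : 0 < Real.cos u := Real.cos_pos_of_mem_Ioo ⟨by linarith [hu.1], by linarith [hu.2]⟩
    have hsq : 0 < Real.sin u ^ 2 := by positivity
    have hsq1 : Real.sin u ^ 2 < 1 := by nlinarith [Real.sin_sq_add_cos_sq u]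
    have hopen : IsOpen (Ioo (0:ℝ) 1) := isOpen_Ioo
    have hmem : Real.sin u ^ 2 ∈ Ioo (0:ℝ) 1 := ⟨hsq, hsq1⟩
    have hcontf : ContinuousOn f (Ioo (0:ℝ) 1) := by
      apply ContinuousOn.mul
      · exact fun x hx => (Real.continuousAt_rpow_const x _ (Or.inl (ne_of_gt hx.1))).continuousWithinAt
      · intro x hx
        apply ContinuousWithinAt.rpow_const
        · exact (continuous_const.sub continuous_id).continuousWithinAt
        · left; intro h; have := sub_eq_zero.mp h; linarith [hx.2]
    have hG : HasDerivAt (fun x => ∫ s in (0:ℝ)..x, f s) (f (Real.sin u ^ 2)) (Real.sin u ^ 2) := by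
      apply intervalIntegral.integral_hasDerivAt_right (myIntInt ha (le_of_lt hsq) hsq1)
      · exact hcontf.stronglyMeasurableAtFilter hopen _ hmem
      · exact hcontf.continuousAt (hopen.mem_nhds hmem)
    have hsin2 : HasDerivAt (fun u : ℝ => Real.sin u ^ 2)
        (2 * Real.sin u ^ 1 * Real.cos u) u := (Real.hasDerivAt_sin u).pow 2
    have hGu := hG.comp u hsin2
    have hcot : HasDerivAt (fun u => Real.cos u / Real.sin u)
        ((-Real.sin u * Real.sin u - Real.cos u * Real.cos u) / Real.sin u ^ 2) u :=
      (Real.hasDerivAt_cos u).div (Real.hasDerivAt_sin u) hsu.ne'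
    have hcot' : HasDerivAt (fun u => Real.cos u / Real.sin u) (-(1 / Real.sin u ^ 2)) u := by
      convert hcot using 1
      have hpy := Real.sin_sq_add_cos_sq u
      field_simp
      nlinarith [hpy]
    have hpow : HasDerivAt (fun u => (Real.cos u / Real.sin u) ^ (1 - 2 * a))
        (-(1 / Real.sin u ^ 2) * (1 - 2 * a) * (Real.cos u / Real.sin u) ^ (1 - 2 * a - 1)) u := by
      exact hcot'.rpow_const (Or.inl (by positivity))
    have hH := (hasDerivAt_id u).mul hpow
    have hFd := (hGu.const_mul a).sub hH
    refine hFd.congr_deriv ?_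
    symm
    rw [hf]
    have h1ms : (1 : ℝ) - Real.sin u ^ 2 = Real.cos u ^ 2 := by
      nlinarith [Real.sin_sq_add_cos_sq u]
    simp only [h1ms, id_eq]
    have hc1 : a * ((Real.sin u ^ 2) ^ (a - 1) * (Real.cos u ^ 2) ^ (1 - a - 1) *
        (2 * Real.sin u ^ 1 * Real.cos u)) = a * (2 * (Real.cos u / Real.sin u) ^ (1 - 2 * a)) := by
      rw [pow_one, ← rpow_calc hsu hcu]
    rw [hc1]
    have e1 : (Real.cos u / Real.sin u) ^ (1 - 2 * a) =
        (Real.cos u / Real.sin u) ^ (-(2 * a)) * (Real.cos u / Real.sin u) := by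
      rw [show (1:ℝ) - 2 * a = -(2 * a) + 1 by ring,
        Real.rpow_add_one (by positivity : (Real.cos u / Real.sin u) ≠ 0) (-(2 * a))]
    have e2 : (Real.cos u / Real.sin u) ^ (1 - 2 * a - 1) =
        (Real.cos u / Real.sin u) ^ (-(2 * a)) := by
      rw [show (1:ℝ) - 2 * a - 1 = -(2 * a) by ring]
    rw [e1, e2]
    generalize (Real.cos u / Real.sin u) ^ (-(2 * a)) = P
    field_simp
    ring
  -- monotonicity
  have hmono : MonotoneOn F (Icc 0 t) := by
    apply monotoneOn_of_deriv_nonneg (convex_Icc 0 t) hcontF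
    · rw [interior_Icc]
      intro u hu
      exact ((hderiv u hu).differentiableAt).differentiableWithinAt
    · rw [interior_Icc]
      intro u hu
      rw [(hderiv u hu).deriv]
      have hsu : 0 < Real.sin u := Real.sin_pos_of_pos_of_lt_pi hu.1 (by linarith [hu.2])
      have hcu : 0 < Real.cos u := Real.cos_pos_of_mem_Ioo ⟨by linarith [hu.1], by linarith [hu.2]⟩
      have h1 : Real.sin u * Real.cos u ≤ u := by
        have h2 := Real.sin_le hu.1.le
        nlinarith [Real.cos_le_one u]
      have h3 : (0:ℝ) ≤ (Real.cos u / Real.sin u) ^ (-(2 * a)) := by positivity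
      apply mul_nonneg (by linarith)
      apply mul_nonneg h3
      apply div_nonneg (by linarith) (by positivity)
  have hF0 : F 0 = 0 := by simp [hF]
  have := hmono (left_mem_Icc.mpr ht.le) (right_mem_Icc.mpr ht.le) ht.le
  rw [hF0] at this
  have hFt : 0 ≤ F t := this
  rw [hF] at hFt
  simp only [incBeta, ge_iff_le]
  linarith [hFt]
end
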